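/- Let I ⊆ ℝ be an open interval, let e₁, e₂, e₃ : I → ℝ³ be differentiable maps forming at every point a positively oriented orthonormal frame with e₃ = e₁ × e₂, and let κ : I → ℝ be differentiable, such that the Darboux frame equations e₁' = e₂, e₂' = −e₁ + κ·e₃, e₃' = −κ·e₂ hold on I. Let φ : I → ℝ be three times differentiable and set p := φ·e₁. Then on I the triple product of derivatives satisfies (p' × p'') · p''' = (φ² − φ·φ'' + 2·φ'²)·φ·κ' + (κ²·φ²·φ' + φ²·φ' + φ²·φ''' − 6·φ·φ'·φ'' + 6·φ'³)·κ. -/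

import Mathlib

open Matrix

set_option maxHeartbeats 2000000 in
lemma triple_key (a b : Fin 3 → ℝ) (u₁ u₂ u₃ v₁ v₂ v₃ w₁ w₂ w₃ : ℝ) :
    ((u₁ • a + u₂ • b + u₃ • (a ⨯₃ b)) ⨯₃ (v₁ • a + v₂ • b + v₃ • (a ⨯₃ b))) ⬝ᵥ
      (w₁ • a + w₂ • b + w₃ • (a ⨯₃ b)) =
    (u₁ * (v₂ * w₃ - v₃ * w₂) - u₂ * (v₁ * w₃ - v₃ * w₁) + u₃ * (v₁ * w₂ - v₂ * w₁)) *
      ((a ⬝ᵥ a) * (b ⬝ᵥ b) - (a ⬝ᵥ b) ^ 2) := by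
  simp [crossProduct, dotProduct, Fin.sum_univ_three, Matrix.vecHead, Matrix.vecTail,
    Pi.add_apply, Pi.smul_apply, smul_eq_mul, Function.comp]
  ring

/-- For a curve `p = φ·e₁` on a cone over a spherical curve with Darboux
frame `e₁, e₂, e₃` and geodesic curvature `κ`, the triple product `(p' × p'')·p'''` equals
`(φ² − φ·φ'' + 2·φ'²)·φ·κ' + (κ²·φ²·φ' + φ²·φ' + φ²·φ''' − 6·φ·φ'·φ'' + 6·φ'³)·κ`. -/
theorem cone_curve_triple_product
    (I : Set ℝ) (hI : IsOpen I) (hI' : I.OrdConnected)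
    (e₁ e₂ e₃ : ℝ → (Fin 3 → ℝ)) (κ φ : ℝ → ℝ)
    (he₁ : ∀ x ∈ I, DifferentiableAt ℝ e₁ x)
    (he₂ : ∀ x ∈ I, DifferentiableAt ℝ e₂ x)
    (he₃ : ∀ x ∈ I, DifferentiableAt ℝ e₃ x)
    (hκ : ∀ x ∈ I, DifferentiableAt ℝ κ x)
    (hon₁ : ∀ x ∈ I, e₁ x ⬝ᵥ e₁ x = 1)
    (hon₂ : ∀ x ∈ I, e₂ x ⬝ᵥ e₂ x = 1)
    (hon₁₂ : ∀ x ∈ I, e₁ x ⬝ᵥ e₂ x = 0)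
    (hor : ∀ x ∈ I, e₃ x = e₁ x ⨯₃ e₂ x)
    (hd₁ : ∀ x ∈ I, deriv e₁ x = e₂ x)
    (hd₂ : ∀ x ∈ I, deriv e₂ x = -e₁ x + κ x • e₃ x)
    (hd₃ : ∀ x ∈ I, deriv e₃ x = -(κ x) • e₂ x)
    (hφ : ∀ x ∈ I, DifferentiableAt ℝ φ x)
    (hφ' : ∀ x ∈ I, DifferentiableAt ℝ (deriv φ) x)
    (hφ'' : ∀ x ∈ I, DifferentiableAt ℝ (deriv (deriv φ)) x)
    (p : ℝ → (Fin 3 → ℝ)) (hp : p = fun x => φ x • e₁ x) :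
    ∀ x ∈ I,
      (deriv p x ⨯₃ deriv (deriv p) x) ⬝ᵥ deriv (deriv (deriv p)) x =
        (φ x ^ 2 - φ x * deriv (deriv φ) x + 2 * (deriv φ x) ^ 2) * φ x * deriv κ x +
          ((κ x) ^ 2 * (φ x) ^ 2 * deriv φ x + (φ x) ^ 2 * deriv φ x +
            (φ x) ^ 2 * deriv (deriv (deriv φ)) x - 6 * φ x * deriv φ x * deriv (deriv φ) x +
            6 * (deriv φ x) ^ 3) * κ x := by
  set q1 : ℝ → Fin 3 → ℝ := fun t => deriv φ t • e₁ t + φ t • e₂ t with hq1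
  set q2 : ℝ → Fin 3 → ℝ := fun t =>
    (deriv (deriv φ) t - φ t) • e₁ t + (2 * deriv φ t) • e₂ t + (φ t * κ t) • e₃ t with hq2
  have hdp : ∀ t ∈ I, deriv p t = q1 t := by
    intro t ht
    rw [hp, deriv_fun_smul (hφ t ht) (he₁ t ht), hd₁ t ht, hq1]
    module
  have hq1d : ∀ t ∈ I, DifferentiableAt ℝ q1 t := fun t ht =>
    ((hφ' t ht).smul (he₁ t ht)).add ((hφ t ht).smul (he₂ t ht))
  have hdp2 : ∀ t ∈ I, deriv (deriv p) t = q2 t := by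
    intro t ht
    have hev : deriv p =ᶠ[nhds t] q1 :=
      Filter.eventuallyEq_of_mem (hI.mem_nhds ht) fun y hy => hdp y hy
    rw [hev.deriv_eq, hq1]
    rw [deriv_fun_add ((hφ' t ht).fun_smul (he₁ t ht)) ((hφ t ht).fun_smul (he₂ t ht)),
      deriv_fun_smul (hφ' t ht) (he₁ t ht), deriv_fun_smul (hφ t ht) (he₂ t ht),
      hd₁ t ht, hd₂ t ht, hq2]
    module
  have hq2d : ∀ t ∈ I, DifferentiableAt ℝ q2 t := fun t ht =>
    ((((hφ'' t ht).sub (hφ t ht)).smul (he₁ t ht)).add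
      (((hφ' t ht).const_mul 2).smul (he₂ t ht))).add
      (((hφ t ht).mul (hκ t ht)).smul (he₃ t ht))
  have hdp3 : ∀ t ∈ I, deriv (deriv (deriv p)) t =
      (deriv (deriv (deriv φ)) t - 3 * deriv φ t) • e₁ t +
      (3 * deriv (deriv φ) t - φ t - φ t * κ t ^ 2) • e₂ t +
      (3 * deriv φ t * κ t + φ t * deriv κ t) • e₃ t := by
    intro t ht
    have hev : deriv (deriv p) =ᶠ[nhds t] q2 :=
      Filter.eventuallyEq_of_mem (hI.mem_nhds ht) fun y hy => hdp2 y hy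
    rw [hev.deriv_eq, hq2]
    rw [deriv_fun_add
        ((((hφ'' t ht).fun_sub (hφ t ht)).fun_smul (he₁ t ht)).fun_add
          (((hφ' t ht).const_mul 2).fun_smul (he₂ t ht)))
        (((hφ t ht).fun_mul (hκ t ht)).fun_smul (he₃ t ht)),
      deriv_fun_add (((hφ'' t ht).fun_sub (hφ t ht)).fun_smul (he₁ t ht))
        (((hφ' t ht).const_mul 2).fun_smul (he₂ t ht)),
      deriv_fun_smul ((hφ'' t ht).fun_sub (hφ t ht)) (he₁ t ht),
      deriv_fun_smul ((hφ' t ht).const_mul 2) (he₂ t ht),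
      deriv_fun_smul ((hφ t ht).fun_mul (hκ t ht)) (he₃ t ht),
      deriv_fun_sub (hφ'' t ht) (hφ t ht),
      deriv_const_mul 2 (hφ' t ht),
      deriv_fun_mul (hφ t ht) (hκ t ht),
      hd₁ t ht, hd₂ t ht, hd₃ t ht]
    module
  intro x hx
  rw [hdp x hx, hdp2 x hx, hdp3 x hx, hq1, hq2]
  simp only []
  rw [hor x hx]
  have h0 : deriv φ x • e₁ x + φ x • e₂ x =
      deriv φ x • e₁ x + φ x • e₂ x + (0:ℝ) • (e₁ x ⨯₃ e₂ x) := by module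
  rw [h0, triple_key, hon₁ x hx, hon₂ x hx, hon₁₂ x hx]
  ring
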